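/- Let m ≥ 1 and D > 0. There exists a constant C ≥ 1, depending only on m and D, with the following property. Let a < b with b − a ≤ D, let f, g: [a,b] → ℝ be C^m with f(a) = g(a) = 0, let Tf and Tg be the Taylor polynomials of order m of f and g at a, and let 0 < α < 1/C. Suppose that |f' − (Tf)'| ≤ α(b−a)^{m−1} and |g' − (Tg)'| ≤ α(b−a)^{m−1} on [a,b], that (b−a)^m > max(∫_a^b |(Tf)'|, ∫_a^b |(Tg)'|), and that 𝒜 ∈ ℝ satisfies |𝒜| ≤ 3α(b−a)^{2m}. Then there exist C^∞ functions φ, ψ: [a,b] → ℝ such that: (1) D^i ψ(a) = D^i ψ(b) = D^i φ(a) = D^i φ(b) = 0 for 0 ≤ i ≤ m; (2) max(|D^i ψ(x)|, |D^i φ(x)|) ≤ C·√α for all x ∈ [a,b] and 0 ≤ i ≤ m; (3) 4∫_a^b (ψ f' + φ g' + ψ φ') = 𝒜. -/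

import Mathlib

open Set MeasureTheory intervalIntegral

section PerturbationAux

open Module RealInnerProductSpace

lemma exists_ortho_vec (P Q : EuclideanSpace ℝ (Fin 3)) :
    ∃ w : Fin 3 → ℝ, (∑ k, w k * P k) = 0 ∧ (∑ k, w k * Q k) = 0 ∧ (∑ k, w k ^ 2) = 1 := by
  classical
  set S : Submodule ℝ (EuclideanSpace ℝ (Fin 3)) := Submodule.span ℝ {P, Q} with hS
  have horth : Sᗮ ≠ ⊥ := by
    intro hbot
    have hfin : finrank ℝ S ≤ 2 := by
      have h1 : (({P, Q} : Finset (EuclideanSpace ℝ (Fin 3))) :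
          Set (EuclideanSpace ℝ (Fin 3))).finrank ℝ
          ≤ ({P, Q} : Finset (EuclideanSpace ℝ (Fin 3))).card :=
        finrank_span_finset_le_card _
      have h2 : (({P, Q} : Finset (EuclideanSpace ℝ (Fin 3))) :
          Set (EuclideanSpace ℝ (Fin 3)))
          = ({P, Q} : Set (EuclideanSpace ℝ (Fin 3))) := by simp
      rw [h2] at h1
      exact le_trans h1 ((Finset.card_insert_le _ _).trans (by simp))
    have h1 : finrank ℝ S + finrank ℝ Sᗮ = finrank ℝ (EuclideanSpace ℝ (Fin 3)) :=
      Submodule.finrank_add_finrank_orthogonal S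
    rw [hbot, finrank_euclideanSpace_fin] at h1
    simp [finrank_bot] at h1
    omega
  obtain ⟨v, hvS, hv0⟩ := Submodule.exists_mem_ne_zero_of_ne_bot horth
  set w : EuclideanSpace ℝ (Fin 3) := ‖v‖⁻¹ • v with hw
  have hnv : ‖v‖ ≠ 0 := norm_ne_zero_iff.mpr hv0
  have hwS : w ∈ Sᗮ := Submodule.smul_mem _ _ hvS
  have hipP : ⟪P, w⟫ = 0 := Submodule.inner_right_of_mem_orthogonal
    (Submodule.subset_span (by simp)) hwS
  have hipQ : ⟪Q, w⟫ = 0 := Submodule.inner_right_of_mem_orthogonal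
    (Submodule.subset_span (by simp)) hwS
  have hnw : ‖w‖ = 1 := by
    rw [hw, norm_smul]; simp [hnv]
  refine ⟨fun k => w k, ?_, ?_, ?_⟩
  · rw [← hipP, PiLp.inner_apply]; simp [mul_comm]
  · rw [← hipQ, PiLp.inner_apply]; simp [mul_comm]
  · have h3 := real_inner_self_eq_norm_sq w
    rw [hnw, PiLp.inner_apply] at h3
    simp only [RCLike.inner_apply, conj_trivial] at h3
    simp only [one_pow] at h3
    rw [← h3]; exact Finset.sum_congr rfl (fun k _ => by ring)

noncomputable def pertBump : ContDiffBump ((1:ℝ)/2) := ⟨1/8, 1/4, by norm_num, by norm_num⟩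

noncomputable def pB : ℝ → ℝ := fun x => pertBump x

lemma contDiff_pB : ContDiff ℝ (⊤ : ℕ∞) pB := pertBump.contDiff

lemma iteratedDeriv_pB_zero (n : ℕ) {x : ℝ} (hx : x ∉ Icc (1/4 : ℝ) (3/4)) :
    iteratedDeriv n pB x = 0 := by
  have hr : pertBump.rOut = 1/4 := rfl
  have hts : tsupport pB ⊆ Icc (1/4 : ℝ) (3/4) := by
    have h2 := pertBump.tsupport_eq
    rw [show tsupport pB = tsupport pertBump from rfl, h2, hr]
    intro y hy
    simp only [Metric.mem_closedBall, Real.dist_eq] at hy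
    have := abs_le.mp hy
    constructor <;> [linarith [this.1]; linarith [this.2]]
  have hx' : x ∉ tsupport (iteratedFDeriv ℝ n pB) :=
    fun h => hx (hts (tsupport_iteratedFDeriv_subset n h))
  have h0 : iteratedFDeriv ℝ n pB x = 0 := image_eq_zero_of_notMem_tsupport hx'
  rw [iteratedDeriv_eq_iteratedFDeriv, h0]; rfl

noncomputable def pG : ℝ → ℝ := deriv pB

lemma contDiff_pG : ContDiff ℝ (⊤ : ℕ∞) pG := (contDiff_infty_iff_deriv.mp contDiff_pB).2

lemma iteratedDeriv_pG_eq (n : ℕ) : iteratedDeriv n pG = iteratedDeriv (n + 1) pB :=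
  iteratedDeriv_succ'.symm

lemma iteratedDeriv_pG_zero (n : ℕ) {x : ℝ} (hx : x ∉ Icc (1/4 : ℝ) (3/4)) :
    iteratedDeriv n pG x = 0 := by
  rw [iteratedDeriv_pG_eq]; exact iteratedDeriv_pB_zero _ hx

lemma pB_zero {x : ℝ} (hx : x ∉ Icc (1/4 : ℝ) (3/4)) : pB x = 0 := by
  have := iteratedDeriv_pB_zero 0 hx; simpa using this

lemma pG_zero {x : ℝ} (hx : x ∉ Icc (1/4 : ℝ) (3/4)) : pG x = 0 := by
  have := iteratedDeriv_pG_zero 0 hx; simpa using this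

lemma continuous_iteratedDeriv_pB (i : ℕ) : Continuous (iteratedDeriv i pB) :=
  contDiff_pB.continuous_iteratedDeriv i (by exact_mod_cast le_top)

lemma exists_pB_bound (N : ℕ) :
    ∃ K : ℝ, 1 ≤ K ∧ ∀ i ≤ N, ∀ x : ℝ, |iteratedDeriv i pB x| ≤ K := by
  induction N with
  | zero =>
    refine ⟨1, le_refl 1, ?_⟩
    intro i hi x
    interval_cases i
    simp only [iteratedDeriv_zero]
    have h1 : |pB x| = pB x := abs_of_nonneg pertBump.nonneg
    rw [h1]
    exact pertBump.le_one
  | succ N ih =>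
    obtain ⟨K, hK1, hK⟩ := ih
    have hcont : Continuous (fun x => |iteratedDeriv (N+1) pB x|) :=
      (continuous_iteratedDeriv_pB (N+1)).abs
    obtain ⟨z, _, hz⟩ := isCompact_Icc.exists_isMaxOn
      (by norm_num : (Icc (1/4:ℝ) (3/4)).Nonempty)
      (hcont.continuousOn (s := Icc (1/4:ℝ) (3/4)))
    refine ⟨max K (|iteratedDeriv (N+1) pB z|), le_trans hK1 (le_max_left _ _), ?_⟩
    intro i hi x
    rcases Nat.lt_succ_iff_lt_or_eq.mp (Nat.lt_succ_of_le hi) with h | h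
    · exact le_trans (hK i (Nat.lt_succ_iff.mp h) x) (le_max_left _ _)
    · subst h
      by_cases hx : x ∈ Icc (1/4:ℝ) (3/4)
      · exact le_trans (hz hx) (le_max_right _ _)
      · rw [iteratedDeriv_pB_zero _ hx]
        simp only [abs_zero]
        exact le_trans zero_le_one (le_trans hK1 (le_max_left _ _))

lemma iteratedDeriv_comp_affine {F : ℝ → ℝ} (hF : ContDiff ℝ (⊤ : ℕ∞) F) (ℓ c : ℝ)
    (n : ℕ) (x : ℝ) :
    iteratedDeriv n (fun y => F ((y - c) / ℓ)) x = (1/ℓ)^n * iteratedDeriv n F ((x - c)/ℓ) := by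
  set G : ℝ → ℝ := fun z => F (ℓ⁻¹ * z) with hG
  have h1 : (fun y => F ((y - c) / ℓ)) = fun y => G (y + (-c)) := by
    funext y; rw [hG]; congr 1; field_simp; ring
  have hF' : ContDiff ℝ (n : ℕ∞) F := hF.of_le (by exact_mod_cast le_top)
  rw [h1, iteratedDeriv_comp_add_const, hG, iteratedDeriv_comp_const_mul hF']
  rw [one_div]
  rw [sub_eq_add_neg]
  field_simp

lemma iteratedDeriv_fun_sum' {ι : Type*} (s : Finset ι) (f : ι → ℝ → ℝ)
    (hf : ∀ i ∈ s, ContDiff ℝ (⊤ : ℕ∞) (f i)) (n : ℕ) (x : ℝ) :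
    iteratedDeriv n (fun y => ∑ i ∈ s, f i y) x = ∑ i ∈ s, iteratedDeriv n (f i) x := by
  induction n generalizing f with
  | zero => simp
  | succ n ih =>
    rw [iteratedDeriv_succ']
    have hd : (deriv fun y => ∑ i ∈ s, f i y) = fun y => ∑ i ∈ s, deriv (f i) y := by
      funext y
      exact deriv_fun_sum
        (fun i hi => ((hf i hi).differentiable (by simp)).differentiableAt)
    rw [hd, ih (fun i => deriv (f i))
      (fun i hi => (contDiff_infty_iff_deriv.mp (hf i hi)).2)]
    exact Finset.sum_congr rfl fun i _ => (congrFun iteratedDeriv_succ' x).symm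

lemma iteratedDeriv_cmul {F : ℝ → ℝ} (hF : ContDiff ℝ (⊤ : ℕ∞) F) (c : ℝ) (n : ℕ) (x : ℝ) :
    iteratedDeriv n (fun y => c * F y) x = c * iteratedDeriv n F x := by
  rw [← iteratedDerivWithin_univ (f := fun y => c * F y),
    ← iteratedDerivWithin_univ (f := F)]
  have hF' : ContDiff ℝ (n : ℕ) F :=
    hF.of_le (by exact_mod_cast le_top : ((n : ℕ) : WithTop ℕ∞) ≤ ((⊤ : ℕ∞) : WithTop ℕ∞))
  exact iteratedDerivWithin_const_mul (mem_univ x) uniqueDiffOn_univ c hF'.contDiffWithinAt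

lemma iteratedDeriv_zero_fun (n : ℕ) (x : ℝ) :
    iteratedDeriv n (fun _ : ℝ => (0:ℝ)) x = 0 := by
  rw [iteratedDeriv_eq_iteratedFDeriv, iteratedFDeriv_zero_fun]; rfl

noncomputable def pM : ℝ := ∫ y in (0:ℝ)..1, pG y ^ 2

lemma pG_cont : Continuous pG := contDiff_pG.continuous

lemma pG_sq_intble (s t : ℝ) : IntervalIntegrable (fun y => pG y ^ 2) volume s t :=
  ((pG_cont.pow 2).continuousOn).intervalIntegrable

lemma pM_pos : 0 < pM := by
  have h0 : pB (1/4) = 0 := by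
    have h : (1/4 : ℝ) ∉ Function.support pB := by
      rw [show Function.support pB = Function.support (pertBump : ℝ → ℝ) from rfl,
        pertBump.support_eq]
      simp only [Metric.mem_ball, Real.dist_eq, not_lt]
      rw [show pertBump.rOut = 1/4 from rfl]
      rw [abs_of_nonpos (by norm_num)]
      norm_num
    simpa using Function.notMem_support.mp h
  have h1 : pB (1/2) = 1 := by
    apply pertBump.one_of_mem_closedBall
    simp [Metric.mem_closedBall, Real.dist_eq, show pertBump.rIn = 1/8 from rfl]
  obtain ⟨ξ, hξmem, hξ⟩ := exists_deriv_eq_slope pB (by norm_num : (1/4:ℝ) < 1/2)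
    (contDiff_pB.continuous.continuousOn)
    ((contDiff_pB.differentiable (by simp)).differentiableOn)
  have hξ4 : pG ξ = 4 := by
    rw [show pG ξ = deriv pB ξ from rfl, hξ, h0, h1]; norm_num
  have hopen : IsOpen (pG ⁻¹' Ioi (2:ℝ)) := isOpen_Ioi.preimage pG_cont
  have hξT : ξ ∈ pG ⁻¹' Ioi (2:ℝ) := by
    simp only [mem_preimage, mem_Ioi, hξ4]; norm_num
  obtain ⟨δ, hδ0, hδ⟩ := Metric.isOpen_iff.mp hopen ξ hξT
  set δ' : ℝ := min (δ/2) (1/8) with hδ'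
  have hδ'0 : 0 < δ' := by positivity
  have hδ'le : δ' ≤ δ/2 := min_le_left _ _
  have hδ'le8 : δ' ≤ 1/8 := min_le_right _ _
  have hξlo : (1/4:ℝ) < ξ := hξmem.1
  have hξhi : ξ < (1/2:ℝ) := hξmem.2
  have hsub : ∀ y ∈ Ioo (ξ - δ') (ξ + δ'), 0 < pG y ^ 2 := by
    intro y hy
    have hball : y ∈ Metric.ball ξ δ := by
      simp only [Metric.mem_ball, Real.dist_eq]
      rw [abs_lt]; constructor <;> [linarith [hy.1, hδ'le, hδ0]; linarith [hy.2, hδ'le, hδ0]]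
    have h2 : 2 < pG y := hδ hball
    positivity
  have hmid : 0 < ∫ y in (ξ - δ')..(ξ + δ'), pG y ^ 2 :=
    intervalIntegral.intervalIntegral_pos_of_pos_on (pG_sq_intble _ _) hsub (by linarith)
  have hsplit : pM = (∫ y in (0:ℝ)..(ξ - δ'), pG y ^ 2) + (∫ y in (ξ - δ')..(ξ + δ'), pG y ^ 2)
      + ∫ y in (ξ + δ')..(1:ℝ), pG y ^ 2 := by
    have h1' := intervalIntegral.integral_add_adjacent_intervals (pG_sq_intble (ξ - δ') (ξ + δ'))
      (pG_sq_intble (ξ + δ') 1)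
    have h2' := intervalIntegral.integral_add_adjacent_intervals (pG_sq_intble 0 (ξ - δ'))
      (pG_sq_intble (ξ - δ') 1)
    rw [pM, ← h2', ← h1']
    ring
  have hnn1 : 0 ≤ ∫ y in (0:ℝ)..(ξ - δ'), pG y ^ 2 :=
    intervalIntegral.integral_nonneg (by linarith) (fun x _ => sq_nonneg _)
  have hnn2 : 0 ≤ ∫ y in (ξ + δ')..(1:ℝ), pG y ^ 2 :=
    intervalIntegral.integral_nonneg (by linarith) (fun x _ => sq_nonneg _)
  linarith [hsplit, hmid, hnn1, hnn2]

lemma integral_comp_affine (F : ℝ → ℝ) {ℓ : ℝ} (hℓ : ℓ ≠ 0) (c a b : ℝ) :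
    ∫ x in a..b, F ((x - c)/ℓ) = ℓ • ∫ y in (a-c)/ℓ..(b-c)/ℓ, F y := by
  rw [show (fun x => F ((x - c)/ℓ)) = fun x => (fun y => F (y/ℓ)) (x - c) from rfl]
  rw [intervalIntegral.integral_comp_sub_right (fun y => F (y/ℓ)) c]
  exact intervalIntegral.integral_comp_div (fun y => F y) hℓ

lemma pG_sq_integral_full {s t : ℝ} (hs : s ≤ 0) (ht : 1 ≤ t) :
    ∫ y in s..t, pG y ^ 2 = pM := by
  have e1 : ∫ y in s..(0:ℝ), pG y ^ 2 = 0 := by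
    have heq : EqOn (fun y => pG y ^ 2) (fun _ => (0:ℝ)) (uIcc s 0) := by
      intro y hy
      rw [uIcc_of_le hs] at hy
      have h : pG y = 0 := pG_zero (by
        intro h'; have := h'.1; have := hy.2; norm_num at *; linarith)
      simp [h]
    rw [intervalIntegral.integral_congr heq, intervalIntegral.integral_zero]
  have e2 : ∫ y in (1:ℝ)..t, pG y ^ 2 = 0 := by
    have heq : EqOn (fun y => pG y ^ 2) (fun _ => (0:ℝ)) (uIcc 1 t) := by
      intro y hy
      rw [uIcc_of_le ht] at hy
      have h : pG y = 0 := pG_zero (by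
        intro h'; have := h'.2; have := hy.1; norm_num at *; linarith)
      simp [h]
    rw [intervalIntegral.integral_congr heq, intervalIntegral.integral_zero]
  rw [← intervalIntegral.integral_add_adjacent_intervals (pG_sq_intble s 0) (pG_sq_intble 0 t),
    e1, zero_add,
    ← intervalIntegral.integral_add_adjacent_intervals (pG_sq_intble 0 1) (pG_sq_intble 1 t),
    e2, add_zero]
  rfl

end PerturbationAux

set_option maxHeartbeats 1600000 in
/-- Lemma 6.6: construction of the perturbations `φ, ψ` in the case where
both Taylor polynomials `Tf, Tg` have small average derivative. -/
theorem perturbation_small_derivative_case (m : ℕ) (hm : 1 ≤ m) (D : ℝ) (hD : 0 < D) :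
    ∃ C : ℝ, 1 ≤ C ∧
      ∀ (a b : ℝ), a < b → b - a ≤ D →
      ∀ (f g : ℝ → ℝ),
        ContDiffOn ℝ (m : ℕ∞) f (Icc a b) → ContDiffOn ℝ (m : ℕ∞) g (Icc a b) →
        f a = 0 → g a = 0 →
      ∀ (Tf Tg : ℝ → ℝ),
        (∀ x, Tf x = ∑ k ∈ Finset.range (m + 1),
          iteratedDerivWithin k f (Icc a b) a * (x - a) ^ k / (Nat.factorial k : ℝ)) →
        (∀ x, Tg x = ∑ k ∈ Finset.range (m + 1),
          iteratedDerivWithin k g (Icc a b) a * (x - a) ^ k / (Nat.factorial k : ℝ)) →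
      ∀ α : ℝ, 0 < α → α < 1 / C →
        (∀ x ∈ Icc a b, |derivWithin f (Icc a b) x - deriv Tf x| ≤ α * (b - a) ^ (m - 1)) →
        (∀ x ∈ Icc a b, |derivWithin g (Icc a b) x - deriv Tg x| ≤ α * (b - a) ^ (m - 1)) →
        max (∫ x in a..b, |deriv Tf x|) (∫ x in a..b, |deriv Tg x|) < (b - a) ^ m →
      ∀ A : ℝ, |A| ≤ 3 * α * (b - a) ^ (2 * m) →
      ∃ φ ψ : ℝ → ℝ, ContDiff ℝ (⊤ : ℕ∞) φ ∧ ContDiff ℝ (⊤ : ℕ∞) ψ ∧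
        (∀ i ≤ m, iteratedDeriv i ψ a = 0 ∧ iteratedDeriv i ψ b = 0 ∧
          iteratedDeriv i φ a = 0 ∧ iteratedDeriv i φ b = 0) ∧
        (∀ i ≤ m, ∀ x ∈ Icc a b,
          max |iteratedDeriv i ψ x| |iteratedDeriv i φ x| ≤ C * Real.sqrt α) ∧
        4 * (∫ x in a..b, (ψ x * derivWithin f (Icc a b) x + φ x * derivWithin g (Icc a b) x +
          ψ x * deriv φ x)) = A := by
  classical
  obtain ⟨K, hK1, hK⟩ := exists_pB_bound (m + 1)
  set C : ℝ := max 1 (3 ^ (m+1) * K * (max 1 D)^m * Real.sqrt (3 / (4 * pM))) with hC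
  refine ⟨C, le_max_left _ _, ?_⟩
  intro a b hab hbaD f g hf hg _ _ Tf Tg _ _ α hα0 _ _ _ _ A hA
  set h : ℝ := b - a with hh
  have hh0 : 0 < h := by simp [hh]; linarith
  set ℓ : ℝ := h / 3 with hℓdef
  have hℓ0 : 0 < ℓ := by positivity
  have hℓne : ℓ ≠ 0 := ne_of_gt hℓ0
  set c : Fin 3 → ℝ := fun k => a + (k : ℕ) * ℓ with hc
  set f' : ℝ → ℝ := derivWithin f (Icc a b) with hf'
  set g' : ℝ → ℝ := derivWithin g (Icc a b) with hg'
  have hf'c : ContinuousOn f' (Icc a b) :=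
    hf.continuousOn_derivWithin (uniqueDiffOn_Icc hab) (by exact_mod_cast hm)
  have hg'c : ContinuousOn g' (Icc a b) :=
    hg.continuousOn_derivWithin (uniqueDiffOn_Icc hab) (by exact_mod_cast hm)
  set U : Fin 3 → ℝ → ℝ := fun k x => pG ((x - c k)/ℓ) with hU
  set V : Fin 3 → ℝ → ℝ := fun k x => pB ((x - c k)/ℓ) with hV
  have hUcont : ∀ k, Continuous (U k) := by
    intro k
    exact pG_cont.comp ((continuous_id.sub continuous_const).div_const ℓ)
  have hVcont : ∀ k, Continuous (V k) := by
    intro k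
    exact contDiff_pB.continuous.comp ((continuous_id.sub continuous_const).div_const ℓ)
  set Pv : EuclideanSpace ℝ (Fin 3) := WithLp.toLp 2 (fun k => ∫ x in a..b, U k x * f' x) with hPv
  set Qv : EuclideanSpace ℝ (Fin 3) := WithLp.toLp 2 (fun k => ∫ x in a..b, V k x * g' x) with hQv
  obtain ⟨w, hwP, hwQ, hw2⟩ := exists_ortho_vec Pv Qv
  have hwk : ∀ k, |w k| ≤ 1 := by
    intro k
    have h1 : w k ^ 2 ≤ 1 := by
      rw [← hw2]
      exact Finset.single_le_sum (fun i _ => sq_nonneg (w i)) (Finset.mem_univ k)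
    calc |w k| = Real.sqrt (w k ^ 2) := (Real.sqrt_sq_eq_abs _).symm
    _ ≤ Real.sqrt 1 := Real.sqrt_le_sqrt h1
    _ = 1 := Real.sqrt_one
  set r : ℝ := Real.sqrt (|A| / (4 * pM)) with hr
  set ε : ℝ := if 0 ≤ A then 1 else -1 with hε
  set sc : Fin 3 → ℝ := fun k => r * w k with hsc
  set tc : Fin 3 → ℝ := fun k => ε * r * w k with htc
  set ψ : ℝ → ℝ := fun x => ∑ k : Fin 3, sc k * U k x with hψ
  set φ : ℝ → ℝ := fun x => ∑ k : Fin 3, tc k * V k x with hφ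
  -- basic smoothness
  have haff : ∀ k : Fin 3, ContDiff ℝ (⊤:ℕ∞) (fun x : ℝ => (x - c k)/ℓ) :=
    fun k => (contDiff_id.sub contDiff_const).div_const ℓ
  have hUsm : ∀ k : Fin 3, ContDiff ℝ (⊤:ℕ∞) (U k) := fun k => contDiff_pG.comp (haff k)
  have hVsm : ∀ k : Fin 3, ContDiff ℝ (⊤:ℕ∞) (V k) := fun k => contDiff_pB.comp (haff k)
  have hψterm : ∀ k : Fin 3, ContDiff ℝ (⊤:ℕ∞) (fun x => sc k * U k x) :=
    fun k => contDiff_const.mul (hUsm k)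
  have hφterm : ∀ k : Fin 3, ContDiff ℝ (⊤:ℕ∞) (fun x => tc k * V k x) :=
    fun k => contDiff_const.mul (hVsm k)
  have hψsm : ContDiff ℝ (⊤:ℕ∞) ψ := by
    rw [hψ]; exact ContDiff.sum fun k _ => hψterm k
  have hφsm : ContDiff ℝ (⊤:ℕ∞) φ := by
    rw [hφ]; exact ContDiff.sum fun k _ => hφterm k
  -- iterated derivative formulas
  have hψd : ∀ (i : ℕ) (x : ℝ), iteratedDeriv i ψ x
      = ∑ k : Fin 3, sc k * ((1/ℓ)^i * iteratedDeriv i pG ((x - c k)/ℓ)) := by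
    intro i x
    rw [hψ, iteratedDeriv_fun_sum' _ _ (fun k _ => hψterm k)]
    refine Finset.sum_congr rfl fun k _ => ?_
    rw [show (fun x => sc k * U k x) = fun x => sc k * (fun y => pG ((y - c k)/ℓ)) x from rfl]
    rw [iteratedDeriv_cmul (hUsm k)]
    congr 1
    exact iteratedDeriv_comp_affine contDiff_pG ℓ (c k) i x
  have hφd : ∀ (i : ℕ) (x : ℝ), iteratedDeriv i φ x
      = ∑ k : Fin 3, tc k * ((1/ℓ)^i * iteratedDeriv i pB ((x - c k)/ℓ)) := by
    intro i x
    rw [hφ, iteratedDeriv_fun_sum' _ _ (fun k _ => hφterm k)]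
    refine Finset.sum_congr rfl fun k _ => ?_
    rw [show (fun x => tc k * V k x) = fun x => tc k * (fun y => pB ((y - c k)/ℓ)) x from rfl]
    rw [iteratedDeriv_cmul (hVsm k)]
    congr 1
    exact iteratedDeriv_comp_affine contDiff_pB ℓ (c k) i x
  -- endpoint vanishing
  have hk2 : ∀ k : Fin 3, ((k : ℕ) : ℝ) ≤ 2 := by
    intro k
    have := k.is_lt
    exact_mod_cast Nat.lt_succ_iff.mp this
  have hk0 : ∀ k : Fin 3, (0:ℝ) ≤ ((k : ℕ) : ℝ) := fun k => Nat.cast_nonneg _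
  have hargA : ∀ (k : Fin 3) (x : ℝ), x < a + ℓ/4 → (x - c k)/ℓ ∉ Icc (1/4:ℝ) (3/4) := by
    intro k x hx hmem
    have h1 : (1/4 : ℝ) ≤ (x - c k)/ℓ := hmem.1
    rw [le_div_iff₀ hℓ0] at h1
    have : c k = a + (k:ℕ) * ℓ := rfl
    nlinarith [hk0 k, hℓ0]
  have hargB : ∀ (k : Fin 3) (x : ℝ), b - ℓ/4 < x → (x - c k)/ℓ ∉ Icc (1/4:ℝ) (3/4) := by
    intro k x hx hmem
    have h1 : (x - c k)/ℓ ≤ 3/4 := hmem.2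
    rw [div_le_iff₀ hℓ0] at h1
    have hck : c k = a + (k:ℕ) * ℓ := rfl
    have hb : b = a + 3 * ℓ := by rw [hℓdef, hh]; ring
    nlinarith [hk2 k, hℓ0]
  have hψzeroA : ψ =ᶠ[nhds a] (fun _ => (0:ℝ)) := by
    filter_upwards [Iio_mem_nhds (show a < a + ℓ/4 by linarith)] with x hx
    rw [hψ]
    refine Finset.sum_eq_zero fun k _ => ?_
    rw [show U k x = pG ((x - c k)/ℓ) from rfl, pG_zero (hargA k x hx), mul_zero]
  have hψzeroB : ψ =ᶠ[nhds b] (fun _ => (0:ℝ)) := by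
    filter_upwards [Ioi_mem_nhds (show b - ℓ/4 < b by linarith)] with x hx
    rw [hψ]
    refine Finset.sum_eq_zero fun k _ => ?_
    rw [show U k x = pG ((x - c k)/ℓ) from rfl, pG_zero (hargB k x hx), mul_zero]
  have hφzeroA : φ =ᶠ[nhds a] (fun _ => (0:ℝ)) := by
    filter_upwards [Iio_mem_nhds (show a < a + ℓ/4 by linarith)] with x hx
    rw [hφ]
    refine Finset.sum_eq_zero fun k _ => ?_
    rw [show V k x = pB ((x - c k)/ℓ) from rfl, pB_zero (hargA k x hx), mul_zero]
  have hφzeroB : φ =ᶠ[nhds b] (fun _ => (0:ℝ)) := by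
    filter_upwards [Ioi_mem_nhds (show b - ℓ/4 < b by linarith)] with x hx
    rw [hφ]
    refine Finset.sum_eq_zero fun k _ => ?_
    rw [show V k x = pB ((x - c k)/ℓ) from rfl, pB_zero (hargB k x hx), mul_zero]
  -- bounds
  set c3 : ℝ := Real.sqrt (3 / (4 * pM)) with hc3
  have hc3nn : 0 ≤ c3 := Real.sqrt_nonneg _
  have hrnn : 0 ≤ r := Real.sqrt_nonneg _
  have hr_le : r ≤ Real.sqrt α * h ^ m * c3 := by
    have hpm := pM_pos
    have h1 : |A| / (4 * pM) ≤ (3 * α * h ^ (2*m)) / (4 * pM) := by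
      apply div_le_div_of_nonneg_right ?_ (by positivity)
      · exact hA
    calc r ≤ Real.sqrt ((3 * α * h ^ (2*m)) / (4 * pM)) := Real.sqrt_le_sqrt h1
    _ = Real.sqrt α * h ^ m * c3 := by
        rw [show (3 * α * h ^ (2*m)) / (4 * pM) = α * ((h^m)^2 * (3 / (4 * pM))) by
          rw [show 2*m = m*2 from mul_comm 2 m, pow_mul]; ring]
        rw [Real.sqrt_mul hα0.le, Real.sqrt_mul (sq_nonneg _),
          Real.sqrt_sq (pow_nonneg hh0.le m), hc3, mul_assoc]
  have hscle : ∀ k, |sc k| ≤ r := by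
    intro k
    rw [hsc]
    simp only [abs_mul, abs_of_nonneg hrnn]
    calc r * |w k| ≤ r * 1 := by
          apply mul_le_mul_of_nonneg_left (hwk k) hrnn
    _ = r := mul_one r
  have htcle : ∀ k, |tc k| ≤ r := by
    intro k
    rw [htc]
    have : |ε * r * w k| = r * |w k| := by
      rw [abs_mul, abs_mul]
      rw [show |ε| = 1 by rw [hε]; split <;> simp]
      rw [abs_of_nonneg hrnn]; ring
    rw [this]
    calc r * |w k| ≤ r * 1 := mul_le_mul_of_nonneg_left (hwk k) hrnn
    _ = r := mul_one r
  have hmaxD1 : (1:ℝ) ≤ max 1 D := le_max_left _ _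
  have hKnn : (0:ℝ) ≤ K := le_trans zero_le_one hK1
  have key_bound : ∀ i ≤ m, r * ((1/ℓ)^i * K) ≤ Real.sqrt α
      * (3 ^ (m+1) * K * (max 1 D)^m * c3) / 3 := by
    intro i him
    have e1 : (1/ℓ : ℝ) = 3 / h := by rw [hℓdef]; field_simp
    have e2 : h ^ m / h ^ i = h ^ (m - i) := (pow_sub₀ h (ne_of_gt hh0) him).symm
    have e3 : h ^ (m - i) ≤ (max 1 D)^m := by
      calc h^(m-i) ≤ (max 1 D)^(m-i) := by
            apply pow_le_pow_left₀ hh0.le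
            calc h ≤ D := hbaD
            _ ≤ max 1 D := le_max_right 1 D
      _ ≤ (max 1 D)^m := pow_le_pow_right₀ hmaxD1 (Nat.sub_le m i)
    have e4 : (3:ℝ)^i ≤ 3^m := pow_le_pow_right₀ (by norm_num) him
    have hsa : (0:ℝ) ≤ Real.sqrt α := Real.sqrt_nonneg _
    calc r * ((1/ℓ)^i * K) ≤ (Real.sqrt α * h ^ m * c3) * ((1/ℓ)^i * K) := by
          apply mul_le_mul_of_nonneg_right hr_le
          positivity
    _ = Real.sqrt α * (3^i * (h^m / h^i) * c3 * K) := by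
          rw [e1, div_pow]; field_simp
    _ = Real.sqrt α * (3^i * h^(m-i) * c3 * K) := by rw [e2]
    _ ≤ Real.sqrt α * (3^m * (max 1 D)^m * c3 * K) := by
          apply mul_le_mul_of_nonneg_left ?_ hsa
          apply mul_le_mul_of_nonneg_right ?_ hKnn
          apply mul_le_mul_of_nonneg_right ?_ hc3nn
          calc (3:ℝ)^i * h^(m-i) ≤ 3^m * h^(m-i) := by
                apply mul_le_mul_of_nonneg_right e4 (by positivity)
          _ ≤ 3^m * (max 1 D)^m := by
                apply mul_le_mul_of_nonneg_left e3 (by positivity)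
    _ = Real.sqrt α * (3 ^ (m+1) * K * (max 1 D)^m * c3) / 3 := by
          rw [pow_succ]
          ring
  have hCge : 3 ^ (m+1) * K * (max 1 D)^m * c3 ≤ C := le_max_right _ _
  have hsum_bound : ∀ (d : Fin 3 → ℝ) (i : ℕ), i ≤ m → (∀ k, |d k| ≤ r) →
      ∀ (F : Fin 3 → ℝ), (∀ k, |F k| ≤ (1/ℓ)^i * K) →
      |∑ k : Fin 3, d k * F k| ≤ C * Real.sqrt α := by
    intro d i him hd F hF
    have hsa : (0:ℝ) ≤ Real.sqrt α := Real.sqrt_nonneg _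
    calc |∑ k : Fin 3, d k * F k| ≤ ∑ k : Fin 3, |d k * F k| :=
          Finset.abs_sum_le_sum_abs _ _
    _ ≤ ∑ _k : Fin 3, r * ((1/ℓ)^i * K) := by
          apply Finset.sum_le_sum
          intro k _
          rw [abs_mul]
          apply mul_le_mul (hd k) (hF k) (abs_nonneg _) hrnn
    _ = 3 * (r * ((1/ℓ)^i * K)) := by
          rw [Finset.sum_const, Finset.card_univ, Fintype.card_fin, nsmul_eq_mul]
          push_cast
          ring
    _ ≤ 3 * (Real.sqrt α * (3 ^ (m+1) * K * (max 1 D)^m * c3) / 3) := by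
          apply mul_le_mul_of_nonneg_left (key_bound i him) (by norm_num)
    _ = Real.sqrt α * (3 ^ (m+1) * K * (max 1 D)^m * c3) := by ring
    _ ≤ Real.sqrt α * C := mul_le_mul_of_nonneg_left hCge hsa
    _ = C * Real.sqrt α := mul_comm _ _
  -- integrability and integral computations
  have huIcc : uIcc a b = Icc a b := uIcc_of_le hab.le
  have hUint : ∀ k : Fin 3, IntervalIntegrable (fun x => U k x * f' x) volume a b := by
    intro k
    apply ContinuousOn.intervalIntegrable
    apply ContinuousOn.mul (hUcont k).continuousOn
    rw [huIcc]; exact hf'c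
  have hVint : ∀ k : Fin 3, IntervalIntegrable (fun x => V k x * g' x) volume a b := by
    intro k
    apply ContinuousOn.intervalIntegrable
    apply ContinuousOn.mul (hVcont k).continuousOn
    rw [huIcc]; exact hg'c
  have hφderiv : ∀ x, deriv φ x = ∑ k : Fin 3, tc k * ((1/ℓ) * U k x) := by
    intro x
    rw [← iteratedDeriv_one, hφd 1 x]
    refine Finset.sum_congr rfl fun k _ => ?_
    rw [iteratedDeriv_one, pow_one]
    rfl
  have hI1 : ∫ x in a..b, ψ x * f' x = 0 := by
    have step : ∫ x in a..b, ψ x * f' x = ∑ k : Fin 3, sc k * Pv k := by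
      calc ∫ x in a..b, ψ x * f' x
          = ∫ x in a..b, ∑ k : Fin 3, sc k * (U k x * f' x) := by
            apply intervalIntegral.integral_congr
            intro x _
            simp only [hψ]
            rw [Finset.sum_mul]
            exact Finset.sum_congr rfl fun k _ => mul_assoc _ _ _
      _ = ∑ k : Fin 3, ∫ x in a..b, sc k * (U k x * f' x) :=
            intervalIntegral.integral_finset_sum (fun k _ => (hUint k).const_mul _)
      _ = ∑ k : Fin 3, sc k * Pv k := by
            refine Finset.sum_congr rfl fun k _ => ?_
            rw [intervalIntegral.integral_const_mul]
    rw [step]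
    have : ∑ k : Fin 3, sc k * Pv k = r * ∑ k : Fin 3, w k * Pv k := by
      rw [Finset.mul_sum]
      exact Finset.sum_congr rfl fun k _ => by rw [hsc]; ring
    rw [this, hwP, mul_zero]
  have hI2 : ∫ x in a..b, φ x * g' x = 0 := by
    have step : ∫ x in a..b, φ x * g' x = ∑ k : Fin 3, tc k * Qv k := by
      calc ∫ x in a..b, φ x * g' x
          = ∫ x in a..b, ∑ k : Fin 3, tc k * (V k x * g' x) := by
            apply intervalIntegral.integral_congr
            intro x _
            simp only [hφ]
            rw [Finset.sum_mul]
            exact Finset.sum_congr rfl fun k _ => mul_assoc _ _ _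
      _ = ∑ k : Fin 3, ∫ x in a..b, tc k * (V k x * g' x) :=
            intervalIntegral.integral_finset_sum (fun k _ => (hVint k).const_mul _)
      _ = ∑ k : Fin 3, tc k * Qv k := by
            refine Finset.sum_congr rfl fun k _ => ?_
            rw [intervalIntegral.integral_const_mul]
    rw [step]
    have : ∑ k : Fin 3, tc k * Qv k = (ε * r) * ∑ k : Fin 3, w k * Qv k := by
      rw [Finset.mul_sum]
      exact Finset.sum_congr rfl fun k _ => by rw [htc]; ring
    rw [this, hwQ, mul_zero]
  -- off-diagonal vanishing
  have hUU : ∀ j k : Fin 3, j ≠ k → ∀ x : ℝ, U j x * U k x = 0 := by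
    intro j k hjk x
    by_cases hj : (x - c j)/ℓ ∈ Icc (1/4:ℝ) (3/4)
    · have hk : (x - c k)/ℓ ∉ Icc (1/4:ℝ) (3/4) := by
        intro hkmem
        have hdiff : (x - c j)/ℓ - (x - c k)/ℓ = ((k:ℕ):ℝ) - ((j:ℕ):ℝ) := by
          rw [show c j = a + (j:ℕ) * ℓ from rfl, show c k = a + (k:ℕ) * ℓ from rfl]
          field_simp
          ring
        have h1 := hj.1; have h2 := hj.2; have h3 := hkmem.1; have h4 := hkmem.2
        have hne : (j:ℕ) ≠ (k:ℕ) := fun hh' => hjk (Fin.ext hh')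
        rcases Nat.lt_or_ge (j:ℕ) (k:ℕ) with hlt | hge
        · have : ((j:ℕ):ℝ) + 1 ≤ ((k:ℕ):ℝ) := by exact_mod_cast hlt
          linarith
        · have hlt' : (k:ℕ) < (j:ℕ) := lt_of_le_of_ne hge (Ne.symm hne)
          have : ((k:ℕ):ℝ) + 1 ≤ ((j:ℕ):ℝ) := by exact_mod_cast hlt'
          linarith
      rw [show U k x = pG ((x - c k)/ℓ) from rfl, pG_zero hk, mul_zero]
    · rw [show U j x = pG ((x - c j)/ℓ) from rfl, pG_zero hj, zero_mul]
  have hdiag : ∀ k : Fin 3, ∫ x in a..b, U k x * U k x = ℓ * pM := by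
    intro k
    have hlo : (a - c k)/ℓ ≤ 0 := by
      apply div_nonpos_of_nonpos_of_nonneg ?_ hℓ0.le
      rw [show c k = a + (k:ℕ) * ℓ from rfl]
      nlinarith [hk0 k, hℓ0]
    have hhi : (1:ℝ) ≤ (b - c k)/ℓ := by
      rw [le_div_iff₀ hℓ0]
      rw [show c k = a + (k:ℕ) * ℓ from rfl]
      have hb : b = a + 3 * ℓ := by rw [hℓdef, hh]; ring
      nlinarith [hk2 k, hℓ0]
    calc ∫ x in a..b, U k x * U k x
        = ∫ x in a..b, (fun y => pG y ^ 2) ((x - c k)/ℓ) := by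
          apply intervalIntegral.integral_congr
          intro x _
          simp only [hU]
          ring
    _ = ℓ • ∫ y in (a - c k)/ℓ..(b - c k)/ℓ, pG y ^ 2 :=
          integral_comp_affine (fun y => pG y ^ 2) hℓne (c k) a b
    _ = ℓ * pM := by rw [pG_sq_integral_full hlo hhi]; rfl
  have hI3 : ∫ x in a..b, ψ x * deriv φ x = (∑ k : Fin 3, sc k * tc k) * pM := by
    have step1 : ∀ x : ℝ, ψ x * deriv φ x
        = ∑ j : Fin 3, ∑ k : Fin 3, (sc j * (tc k * (1/ℓ))) * (U j x * U k x) := by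
      intro x
      rw [hφderiv x]
      simp only [hψ]
      rw [Finset.sum_mul_sum]
      refine Finset.sum_congr rfl fun j _ => Finset.sum_congr rfl fun k _ => by ring
    have hint : ∀ j k : Fin 3,
        IntervalIntegrable (fun x => (sc j * (tc k * (1/ℓ))) * (U j x * U k x)) volume a b :=
      fun j k => (((hUcont j).mul (hUcont k)).intervalIntegrable a b).const_mul _
    have hsumcont : ∀ j : Fin 3,
        Continuous (fun x => ∑ k : Fin 3, (sc j * (tc k * (1/ℓ))) * (U j x * U k x)) :=
      fun j => continuous_finset_sum _
        (fun k _ => continuous_const.mul ((hUcont j).mul (hUcont k)))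
    calc ∫ x in a..b, ψ x * deriv φ x
        = ∫ x in a..b, ∑ j : Fin 3, ∑ k : Fin 3, (sc j * (tc k * (1/ℓ))) * (U j x * U k x) := by
          apply intervalIntegral.integral_congr
          intro x _
          exact step1 x
    _ = ∑ j : Fin 3, ∫ x in a..b, ∑ k : Fin 3, (sc j * (tc k * (1/ℓ))) * (U j x * U k x) :=
          intervalIntegral.integral_finset_sum
            (fun j _ => ((hsumcont j).intervalIntegrable a b))
    _ = ∑ j : Fin 3, ∑ k : Fin 3, ∫ x in a..b, (sc j * (tc k * (1/ℓ))) * (U j x * U k x) :=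
          Finset.sum_congr rfl fun j _ =>
            intervalIntegral.integral_finset_sum (fun k _ => hint j k)
    _ = ∑ j : Fin 3, ∑ k : Fin 3, (sc j * (tc k * (1/ℓ))) * ∫ x in a..b, U j x * U k x :=
          Finset.sum_congr rfl fun j _ => Finset.sum_congr rfl fun k _ =>
            intervalIntegral.integral_const_mul _ _
    _ = ∑ j : Fin 3, (sc j * (tc j * (1/ℓ))) * (ℓ * pM) := by
          refine Finset.sum_congr rfl fun j _ => ?_
          rw [Finset.sum_eq_single j]
          · rw [hdiag j]
          · intro k _ hkj
            have : ∫ x in a..b, U j x * U k x = 0 := by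
              have hz : ∀ x : ℝ, U j x * U k x = 0 := hUU j k (Ne.symm hkj)
              calc ∫ x in a..b, U j x * U k x = ∫ _x in a..b, (0:ℝ) := by
                    apply intervalIntegral.integral_congr
                    intro x _
                    exact hz x
              _ = 0 := intervalIntegral.integral_zero
            rw [this, mul_zero]
          · intro hj
            exact absurd (Finset.mem_univ j) hj
    _ = (∑ k : Fin 3, sc k * tc k) * pM := by
          rw [Finset.sum_mul]
          refine Finset.sum_congr rfl fun k _ => ?_
          field_simp
  -- total integral
  have hψcont : Continuous ψ := hψsm.continuous
  have hφ'cont : Continuous (deriv φ) := by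
    have : Continuous (fun x => ∑ k : Fin 3, tc k * ((1/ℓ) * U k x)) := by
      apply continuous_finset_sum
      intro k _
      exact continuous_const.mul (continuous_const.mul (hUcont k))
    exact this.congr (fun x => (hφderiv x).symm)
  have hsum_tc : ∑ k : Fin 3, sc k * tc k = ε * r^2 := by
    have : ∀ k : Fin 3, sc k * tc k = ε * r^2 * w k ^ 2 := by
      intro k
      rw [hsc, htc]
      ring
    rw [Finset.sum_congr rfl (fun k _ => this k), ← Finset.mul_sum, hw2, mul_one]
  have hr2 : r^2 = |A| / (4 * pM) :=
    Real.sq_sqrt (div_nonneg (abs_nonneg A) (by nlinarith [pM_pos]))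
  have hintψf : IntervalIntegrable (fun x => ψ x * f' x) volume a b := by
    apply ContinuousOn.intervalIntegrable
    apply ContinuousOn.mul hψcont.continuousOn
    rw [huIcc]; exact hf'c
  have hintφg : IntervalIntegrable (fun x => φ x * g' x) volume a b := by
    apply ContinuousOn.intervalIntegrable
    apply ContinuousOn.mul hφsm.continuous.continuousOn
    rw [huIcc]; exact hg'c
  have hintψφ : IntervalIntegrable (fun x => ψ x * deriv φ x) volume a b :=
    (hψcont.mul hφ'cont).intervalIntegrable a b
  have hItotal : ∫ x in a..b, (ψ x * f' x + φ x * g' x + ψ x * deriv φ x)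
      = (∫ x in a..b, ψ x * f' x) + (∫ x in a..b, φ x * g' x)
        + ∫ x in a..b, ψ x * deriv φ x := by
    rw [intervalIntegral.integral_add (hintψf.add hintφg) hintψφ,
      intervalIntegral.integral_add hintψf hintφg]
  -- conclusion
  refine ⟨φ, ψ, hφsm, hψsm, ?_, ?_, ?_⟩
  · intro i _
    refine ⟨?_, ?_, ?_, ?_⟩
    · rw [hψzeroA.iteratedDeriv_eq i, iteratedDeriv_zero_fun]
    · rw [hψzeroB.iteratedDeriv_eq i, iteratedDeriv_zero_fun]
    · rw [hφzeroA.iteratedDeriv_eq i, iteratedDeriv_zero_fun]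
    · rw [hφzeroB.iteratedDeriv_eq i, iteratedDeriv_zero_fun]
  · intro i him x _
    have hψb : |iteratedDeriv i ψ x| ≤ C * Real.sqrt α := by
      rw [hψd i x]
      apply hsum_bound sc i him hscle
      intro k
      rw [abs_mul, abs_of_nonneg (by positivity : (0:ℝ) ≤ (1/ℓ)^i)]
      apply mul_le_mul_of_nonneg_left ?_ (by positivity)
      rw [iteratedDeriv_pG_eq]
      exact hK (i+1) (by omega) _
    have hφb : |iteratedDeriv i φ x| ≤ C * Real.sqrt α := by
      rw [hφd i x]
      apply hsum_bound tc i him htcle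
      intro k
      rw [abs_mul, abs_of_nonneg (by positivity : (0:ℝ) ≤ (1/ℓ)^i)]
      apply mul_le_mul_of_nonneg_left ?_ (by positivity)
      exact hK i (by omega) _
    exact max_le hψb hφb
  · rw [hItotal, hI1, hI2, hI3, hsum_tc, hr2]
    have hpm' : pM ≠ 0 := ne_of_gt pM_pos
    have hεA : ε * |A| = A := by
      rw [hε]
      split
      · rw [one_mul, abs_of_nonneg ‹_›]
      · rw [abs_of_neg (by linarith [lt_of_not_ge ‹¬ 0 ≤ A›])]; ring
    have h4 : 4 * ((0:ℝ) + 0 + ε * (|A| / (4 * pM)) * pM) = ε * |A| := by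
      field_simp
      ring
    linarith [h4, hεA]
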